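/- Let V = {n ∈ ℕ : n ≥ 2} be the path graph (n adjacent to n+1) rooted at 2, with weight μ(n) = 1/(n (ln n)^γ) for fixed γ > 1. Then μ(V) < ∞, but the ratio μ(S_n)/μ(n) satisfies μ(S_n)/μ(n) ≥ n·ln(n)/(γ−1) for all n ≥ 2; in particular there is no constant c with μ(S_n) ≤ c·μ(n) for all n. -/

import Mathlib

open Real Filter

noncomputable def Ffun (γ x : ℝ) : ℝ := Real.log x ^ (1 - γ) / (γ - 1)

lemma hasDerivAt_Ffun {γ : ℝ} (hγ : 1 < γ) {x : ℝ} (hx : 1 < x) :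
    HasDerivAt (Ffun γ) (-(1 / (x * Real.log x ^ γ))) x := by
  have hlx : 0 < Real.log x := Real.log_pos hx
  have hlog : HasDerivAt Real.log x⁻¹ x := Real.hasDerivAt_log (by linarith)
  have hpow : HasDerivAt (fun y : ℝ => y ^ (1 - γ))
      ((1 - γ) * Real.log x ^ (1 - γ - 1)) (Real.log x) :=
    Real.hasDerivAt_rpow_const (Or.inl hlx.ne')
  have h := (hpow.comp x hlog).div_const (γ - 1)
  refine h.congr_deriv ?_
  have h1 : (1 : ℝ) - γ - 1 = -γ := by ring
  rw [h1, Real.rpow_neg hlx.le]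
  have hxγ : (0:ℝ) < Real.log x ^ γ := Real.rpow_pos_of_pos hlx γ
  have hγ1 : γ - 1 ≠ 0 := by linarith
  field_simp
  ring

lemma mvt_Ffun {γ : ℝ} (hγ : 1 < γ) {a : ℝ} (ha : 2 ≤ a) :
    ∃ c ∈ Set.Ioo a (a + 1), Ffun γ a - Ffun γ (a + 1) = 1 / (c * Real.log c ^ γ) := by
  have hder : ∀ x ∈ Set.Icc a (a+1), HasDerivAt (Ffun γ) (-(1 / (x * Real.log x ^ γ))) x := by
    intro x hx
    exact hasDerivAt_Ffun hγ (by have := hx.1; linarith)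
  obtain ⟨c, hc, hceq⟩ := exists_hasDerivAt_eq_slope (Ffun γ)
    (fun x => -(1 / (x * Real.log x ^ γ))) (by linarith : a < a + 1)
    (fun x hx => (hder x hx).continuousAt.continuousWithinAt)
    (fun x hx => hder x (Set.Ioo_subset_Icc_self hx))
  refine ⟨c, hc, ?_⟩
  have h1 : a + 1 - a = 1 := by ring
  rw [h1, div_one] at hceq
  linarith [hceq]

lemma g_pos {γ : ℝ} {a : ℝ} (ha : 2 ≤ a) : 0 < 1 / (a * Real.log a ^ γ) := by
  have hla : 0 < Real.log a := Real.log_pos (by linarith)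
  exact one_div_pos.2 (mul_pos (by linarith) (Real.rpow_pos_of_pos hla γ))

lemma g_anti {γ : ℝ} (hγ : 0 < γ) {a b : ℝ} (ha : 2 ≤ a) (hab : a ≤ b) :
    1 / (b * Real.log b ^ γ) ≤ 1 / (a * Real.log a ^ γ) := by
  have hla : 0 < Real.log a := Real.log_pos (by linarith)
  have ha0 : 0 < a := by linarith
  have hpa : 0 < a * Real.log a ^ γ := mul_pos ha0 (Real.rpow_pos_of_pos hla γ)
  apply one_div_le_one_div_of_le hpa
  exact mul_le_mul hab
    (Real.rpow_le_rpow hla.le (Real.log_le_log ha0 hab) hγ.le)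
    (Real.rpow_pos_of_pos hla γ).le (by linarith)

lemma telescope_le {γ : ℝ} (hγ : 1 < γ) {a : ℝ} (ha : 2 ≤ a) :
    Ffun γ a - Ffun γ (a + 1) ≤ 1 / (a * Real.log a ^ γ) := by
  obtain ⟨c, hc, heq⟩ := mvt_Ffun hγ ha
  rw [heq]
  exact g_anti (by linarith) ha hc.1.le

lemma le_telescope {γ : ℝ} (hγ : 1 < γ) {a : ℝ} (ha : 2 ≤ a) :
    1 / ((a + 1) * Real.log (a + 1) ^ γ) ≤ Ffun γ a - Ffun γ (a + 1) := by
  obtain ⟨c, hc, heq⟩ := mvt_Ffun hγ ha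
  rw [heq]
  exact g_anti (by linarith) (by linarith [hc.1]) hc.2.le

lemma telescope_nonneg {γ : ℝ} (hγ : 1 < γ) {a : ℝ} (ha : 2 ≤ a) :
    0 ≤ Ffun γ a - Ffun γ (a + 1) :=
  le_trans (g_pos (by linarith : (2:ℝ) ≤ a + 1)).le (le_telescope hγ ha)

lemma Ffun_nonneg {γ : ℝ} (hγ : 1 < γ) {x : ℝ} (hx : 1 ≤ x) : 0 ≤ Ffun γ x :=
  div_nonneg (Real.rpow_nonneg (Real.log_nonneg hx) _) (by linarith)

/-- summability of the shifted series -/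
lemma summable_shift {γ : ℝ} (hγ : 1 < γ) (n : ℕ) (hn : 2 ≤ n) :
    Summable (fun i : ℕ => 1 / ((↑(i + n) : ℝ) * Real.log (↑(i + n)) ^ γ)) := by
  have base : Summable (fun i : ℕ => 1 / ((↑(i + 3) : ℝ) * Real.log (↑(i + 3)) ^ γ)) := by
    apply summable_of_sum_range_le (c := Ffun γ 2)
    · intro i
      exact (g_pos (by push_cast; linarith : (2:ℝ) ≤ (↑(i + 3) : ℝ))).le
    · intro N
      have hle : ∀ i : ℕ, 1 / ((↑(i + 3) : ℝ) * Real.log (↑(i + 3)) ^ γ) ≤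
          Ffun γ (↑(i + 2) : ℕ) - Ffun γ (↑(i + 3) : ℕ) := by
        intro i
        have h2 : (2:ℝ) ≤ (↑(i + 2) : ℕ) := by push_cast; linarith
        have hcast : ((↑(i + 3) : ℕ) : ℝ) = ((↑(i + 2) : ℕ) : ℝ) + 1 := by push_cast; ring
        rw [hcast]
        exact le_telescope hγ h2
      calc ∑ i ∈ Finset.range N, 1 / ((↑(i + 3) : ℝ) * Real.log (↑(i + 3)) ^ γ)
          ≤ ∑ i ∈ Finset.range N, (Ffun γ (↑(i + 2) : ℕ) - Ffun γ (↑(i + 3) : ℕ)) :=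
            Finset.sum_le_sum fun i _ => hle i
        _ = Ffun γ (↑(0 + 2) : ℕ) - Ffun γ (↑(N + 2) : ℕ) := by
            rw [← Finset.sum_range_sub' (fun i => Ffun γ (↑(i + 2) : ℕ)) N]
        _ ≤ Ffun γ 2 := by
            have h0 : 0 ≤ Ffun γ (↑(N + 2) : ℕ) := Ffun_nonneg hγ (by push_cast; linarith)
            have h2 : ((0 + 2 : ℕ) : ℝ) = 2 := by norm_num
            rw [h2]
            linarith
  rcases Nat.lt_or_ge n 3 with h3 | h3
  · -- n = 2
    have hn2 : n = 2 := by omega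
    subst hn2
    exact (summable_nat_add_iff (f := fun i : ℕ => 1 / ((↑(i + 2) : ℝ) * Real.log (↑(i + 2)) ^ γ)) 1).1 base
  · -- n ≥ 3
    have := (summable_nat_add_iff (f := fun i : ℕ => 1 / ((↑(i + 3) : ℝ) * Real.log (↑(i + 3)) ^ γ)) (n - 3)).2 base
    apply this.congr
    intro i
    rw [show i + (n - 3) + 3 = i + n from by omega]

lemma tendsto_Ffun_shift {γ : ℝ} (hγ : 1 < γ) (n : ℕ) :
    Tendsto (fun N : ℕ => Ffun γ (↑(N + n) : ℕ)) atTop (nhds 0) := by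
  have h1 : Tendsto (fun N : ℕ => ((↑(N + n) : ℕ) : ℝ)) atTop atTop :=
    tendsto_natCast_atTop_atTop.comp (tendsto_add_atTop_nat n)
  have h2 : Tendsto (fun N : ℕ => Real.log ((↑(N + n) : ℕ) : ℝ)) atTop atTop :=
    Real.tendsto_log_atTop.comp h1
  have h3 : Tendsto (fun x : ℝ => x ^ (1 - γ)) atTop (nhds 0) := by
    have := tendsto_rpow_neg_atTop (by linarith : (0:ℝ) < γ - 1)
    simpa [show -(γ - 1) = 1 - γ by ring] using this
  have h4 := (h3.comp h2).div_const (γ - 1)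
  simpa [Ffun] using h4

lemma tail_lower {γ : ℝ} (hγ : 1 < γ) (n : ℕ) (hn : 2 ≤ n) :
    Ffun γ n ≤ ∑' i : ℕ, 1 / ((↑(i + n) : ℝ) * Real.log (↑(i + n)) ^ γ) := by
  set g : ℕ → ℝ := fun i => 1 / ((↑(i + n) : ℝ) * Real.log (↑(i + n)) ^ γ) with hg
  set T : ℕ → ℝ := fun i => Ffun γ (↑(i + n) : ℕ) - Ffun γ (↑(i + 1 + n) : ℕ) with hT
  have hcast : ∀ i : ℕ, ((↑(i + 1 + n) : ℕ) : ℝ) = ((↑(i + n) : ℕ) : ℝ) + 1 := by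
    intro i; push_cast; ring
  have h2c : ∀ i : ℕ, (2:ℝ) ≤ ((↑(i + n) : ℕ) : ℝ) := fun i => by
    have ha : (2:ℝ) ≤ (n:ℝ) := by exact_mod_cast hn
    have hb : (0:ℝ) ≤ (i:ℝ) := Nat.cast_nonneg i
    push_cast
    linarith
  have hTg : ∀ i, T i ≤ g i := by
    intro i
    simp only [hT, hg, hcast i]
    exact telescope_le hγ (h2c i)
  have hT0 : ∀ i, 0 ≤ T i := by
    intro i
    simp only [hT, hcast i]
    exact telescope_nonneg hγ (h2c i)
  have hgsum : Summable g := summable_shift hγ n hn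
  have hTsum : Summable T := hgsum.of_nonneg_of_le hT0 hTg
  have hps : ∀ N, ∑ i ∈ Finset.range N, T i = Ffun γ (n : ℕ) - Ffun γ (↑(N + n) : ℕ) := by
    intro N
    have := Finset.sum_range_sub' (fun i => Ffun γ (↑(i + n) : ℕ)) N
    simp only [Nat.zero_add] at this
    exact this
  have hlim : Tendsto (fun N => ∑ i ∈ Finset.range N, T i) atTop
      (nhds (Ffun γ (n : ℕ))) := by
    simp only [hps]
    have := (tendsto_const_nhds (x := Ffun γ (n:ℕ)) (f := atTop (α := ℕ))).sub
      (tendsto_Ffun_shift hγ n)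
    simpa using this
  have hTeq : ∑' i, T i = Ffun γ (n : ℕ) :=
    tendsto_nhds_unique hTsum.hasSum.tendsto_sum_nat hlim
  calc Ffun γ (n : ℕ) = ∑' i, T i := hTeq.symm
    _ ≤ ∑' i, g i := Summable.tsum_le_tsum hTg hTsum hgsum

def eShift (n : ℕ) : ℕ ≃ {k : ℕ // n ≤ k} where
  toFun i := ⟨i + n, Nat.le_add_left n i⟩
  invFun k := k.1 - n
  left_inv i := by simp
  right_inv k := Subtype.ext (Nat.sub_add_cancel k.2)

theorem path_graph_finite_measure_not_john (γ : ℝ) (hγ : 1 < γ) :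
    (Summable fun n : {n : ℕ // 2 ≤ n} => 1 / ((n : ℝ) * Real.log n ^ γ)) ∧
    (∀ n : ℕ, 2 ≤ n →
      (n : ℝ) * Real.log n / (γ - 1) ≤
        (∑' k : {k : ℕ // n ≤ k}, 1 / ((k : ℝ) * Real.log k ^ γ)) /
          (1 / ((n : ℝ) * Real.log n ^ γ))) ∧
    ¬ ∃ c : ℝ, ∀ n : ℕ, 2 ≤ n →
      (∑' k : {k : ℕ // n ≤ k}, 1 / ((k : ℝ) * Real.log k ^ γ)) ≤
        c * (1 / ((n : ℝ) * Real.log n ^ γ)) := by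
  have key1 : Summable fun n : {n : ℕ // 2 ≤ n} => 1 / ((n : ℝ) * Real.log n ^ γ) := by
    have h := summable_shift hγ 2 le_rfl
    exact (Equiv.summable_iff (eShift 2)
      (f := fun n : {n : ℕ // 2 ≤ n} => 1 / ((n : ℝ) * Real.log n ^ γ))).1 (by exact h)
  have key2 : ∀ n : ℕ, 2 ≤ n →
      (n : ℝ) * Real.log n / (γ - 1) ≤
        (∑' k : {k : ℕ // n ≤ k}, 1 / ((k : ℝ) * Real.log k ^ γ)) /
          (1 / ((n : ℝ) * Real.log n ^ γ)) := by
    intro n hn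
    have hnR : (2:ℝ) ≤ (n:ℝ) := by exact_mod_cast hn
    have hl : 0 < Real.log n := Real.log_pos (by linarith)
    have hx : 0 < (n:ℝ) * Real.log n ^ γ :=
      mul_pos (by linarith) (Real.rpow_pos_of_pos hl γ)
    have hsub : (∑' k : {k : ℕ // n ≤ k}, 1 / ((k : ℝ) * Real.log k ^ γ)) =
        ∑' i : ℕ, 1 / ((↑(i + n) : ℝ) * Real.log (↑(i + n)) ^ γ) :=
      (Equiv.tsum_eq (eShift n)
        (fun k : {k : ℕ // n ≤ k} => 1 / ((k : ℝ) * Real.log k ^ γ))).symm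
    rw [hsub, le_div_iff₀ (one_div_pos.2 hx)]
    have hlow := tail_lower hγ n hn
    refine le_trans (le_of_eq ?_) hlow
    have hpow : Real.log (n:ℝ) ^ (1 - γ) * Real.log (n:ℝ) ^ γ = Real.log (n:ℝ) := by
      rw [← Real.rpow_add hl]
      norm_num
    unfold Ffun
    have hγ1 : γ - 1 ≠ 0 := by linarith
    have hn0 : (n:ℝ) ≠ 0 := by linarith
    have hLγ : Real.log (n:ℝ) ^ γ ≠ 0 := (Real.rpow_pos_of_pos hl γ).ne'
    field_simp
    linear_combination (-1 : ℝ) * hpow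
  refine ⟨key1, key2, ?_⟩
  rintro ⟨c, hc⟩
  obtain ⟨m, hm⟩ := exists_nat_gt (c * (γ - 1))
  set n := m + 3 with hndef
  have hn2 : 2 ≤ n := by omega
  have hnR : (3:ℝ) ≤ (n:ℝ) := by
    have : (0:ℝ) ≤ (m:ℝ) := Nat.cast_nonneg m
    push_cast [hndef]
    linarith
  have hlog1 : 1 ≤ Real.log n := by
    have he : Real.exp 1 ≤ (n:ℝ) :=
      le_trans (le_trans Real.exp_one_lt_d9.le (by norm_num)) hnR
    calc (1:ℝ) = Real.log (Real.exp 1) := (Real.log_exp 1).symm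
      _ ≤ Real.log n := Real.log_le_log (Real.exp_pos 1) he
  have hl : 0 < Real.log n := by linarith
  have hx : 0 < (n:ℝ) * Real.log n ^ γ :=
    mul_pos (by linarith) (Real.rpow_pos_of_pos hl γ)
  have hμ : 0 < 1 / ((n:ℝ) * Real.log n ^ γ) := one_div_pos.2 hx
  have h1 := key2 n hn2
  have h3 : (∑' k : {k : ℕ // n ≤ k}, 1 / ((k : ℝ) * Real.log k ^ γ)) /
      (1 / ((n:ℝ) * Real.log n ^ γ)) ≤ c := by
    rw [div_le_iff₀ hμ]
    exact hc n hn2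
  have h4 : (n:ℝ) * Real.log n / (γ - 1) ≤ c := le_trans h1 h3
  rw [div_le_iff₀ (by linarith : (0:ℝ) < γ - 1)] at h4
  have h5 : (n:ℝ) ≤ (n:ℝ) * Real.log n := le_mul_of_one_le_right (by linarith) hlog1
  have hmn : (m:ℝ) < (n:ℝ) := by exact_mod_cast (by omega : m < n)
  linarith
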